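/- arXiv:1904.06320 — 3 statements merged into one kernel-verified Lean document; each statement's English description precedes it below -/
import Mathlib

section
/- Let q ≥ 2 be prime, let ẑ ∈ ℤ₈ with ẑ ≠ 0, and let d̂ ∈ {0,1}ⁿ with Hamming weight |d̂|_H ≥ n/8. For s uniform in {0,1}ⁿ, the Fourier coefficient |E_s[e^{−2πi ẑ (d̂·s)/8}]| satisfies |E_s[e^{−2πi ẑ (d̂·s)/8}]| ≤ cos(π/8)^{n/8} ≤ 2^{−n/80}. -/
open scoped BigOperators
open Real Complex

private lemma cosB (m : ℕ) (h1 : 1 ≤ m) (h7 : m ≤ 7) :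
    Real.cos (Real.pi * m / 4) ≤ √2 / 2 := by
  have hpi := Real.pi_pos
  interval_cases m
  · rw [show Real.pi * (1:ℕ) / 4 = Real.pi / 4 by push_cast; ring, Real.cos_pi_div_four]
  · rw [show Real.pi * (2:ℕ) / 4 = Real.pi / 2 by push_cast; ring, Real.cos_pi_div_two]
    positivity
  · have := Real.cos_nonpos_of_pi_div_two_le_of_le
      (x := Real.pi * (3:ℕ) / 4) (by push_cast; linarith) (by push_cast; linarith)
    have h0 : (0:ℝ) ≤ √2 / 2 := by positivity
    linarith
  · have := Real.cos_nonpos_of_pi_div_two_le_of_le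
      (x := Real.pi * (4:ℕ) / 4) (by push_cast; linarith) (by push_cast; linarith)
    have h0 : (0:ℝ) ≤ √2 / 2 := by positivity
    linarith
  · have := Real.cos_nonpos_of_pi_div_two_le_of_le
      (x := Real.pi * (5:ℕ) / 4) (by push_cast; linarith) (by push_cast; linarith)
    have h0 : (0:ℝ) ≤ √2 / 2 := by positivity
    linarith
  · have := Real.cos_nonpos_of_pi_div_two_le_of_le
      (x := Real.pi * (6:ℕ) / 4) (by push_cast; linarith) (by push_cast; linarith)
    have h0 : (0:ℝ) ≤ √2 / 2 := by positivity
    linarith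
  · rw [show Real.pi * (7:ℕ) / 4 = 2 * Real.pi - Real.pi / 4 by push_cast; ring,
      Real.cos_two_pi_sub, Real.cos_pi_div_four]

private lemma absB (m : ℕ) (h1 : 1 ≤ m) (h7 : m ≤ 7) :
    ‖1 + Complex.exp (-2 * Real.pi * Complex.I * (m : ℂ) / 8)‖
      ≤ 2 * Real.cos (Real.pi / 8) := by
  set θ : ℝ := -(Real.pi * m / 4) with hθ
  have he : (-2 * Real.pi * Complex.I * (m : ℂ) / 8) = (θ : ℂ) * Complex.I := by
    rw [hθ]; push_cast; ring
  rw [he]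
  have hexp : Complex.exp ((θ : ℂ) * Complex.I)
      = (Real.cos θ : ℂ) + (Real.sin θ : ℂ) * Complex.I := by
    rw [Complex.exp_mul_I]
    simp [Complex.ofReal_cos, Complex.ofReal_sin]
  rw [hexp]
  have h1c : (1 : ℂ) + ((Real.cos θ : ℂ) + (Real.sin θ : ℂ) * Complex.I)
      = ((1 + Real.cos θ : ℝ) : ℂ) + ((Real.sin θ : ℝ) : ℂ) * Complex.I := by
    push_cast; ring
  rw [h1c, Complex.norm_add_mul_I]
  have hcosθ : Real.cos θ ≤ √2 / 2 := by
    rw [hθ, Real.cos_neg]; exact cosB m h1 h7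
  have hsum : (1 + Real.cos θ) ^ 2 + Real.sin θ ^ 2 ≤ 2 + √2 := by
    nlinarith [Real.sin_sq_add_cos_sq θ]
  calc √((1 + Real.cos θ) ^ 2 + Real.sin θ ^ 2) ≤ √(2 + √2) := Real.sqrt_le_sqrt hsum
    _ = 2 * Real.cos (Real.pi / 8) := by rw [Real.cos_pi_div_eight]; ring

private lemma cos8_pos : 0 < Real.cos (Real.pi / 8) := by
  apply Real.cos_pos_of_mem_Ioo
  constructor <;> [linarith [Real.pi_pos]; linarith [Real.pi_pos]]

private lemma cos8_le : Real.cos (Real.pi / 8) ≤ (2:ℝ) ^ (-(1:ℝ)/10) := by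
  have h2 : (0:ℝ) ≤ (2:ℝ) ^ (-(1:ℝ)/10) := by positivity
  apply le_of_pow_le_pow_left₀ (n := 10) (by norm_num) h2
  have hrhs : ((2:ℝ) ^ (-(1:ℝ)/10)) ^ (10:ℕ) = 1/2 := by
    rw [← Real.rpow_natCast ((2:ℝ) ^ (-(1:ℝ)/10)) 10, ← Real.rpow_mul (by norm_num)]
    norm_num
  rw [hrhs, Real.cos_pi_div_eight]
  have hs2 : Real.sqrt 2 ≤ 1.415 := by
    nlinarith [Real.sq_sqrt (by norm_num : (0:ℝ) ≤ 2), Real.sqrt_nonneg 2]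
  have hA : (√(2 + √2)) ^ 2 = 2 + √2 := Real.sq_sqrt (by positivity)
  have key : (√(2 + √2) / 2) ^ 10 = (2 + √2) ^ 5 / 1024 := by
    rw [div_pow]
    congr 1
    · rw [show (10:ℕ) = 2 * 5 by norm_num, pow_mul, hA]
    · norm_num
  rw [key]
  have hb : (2 + √2) ^ 5 ≤ (3.415:ℝ) ^ 5 :=
    pow_le_pow_left₀ (by positivity) (by linarith) 5
  norm_num at hb ⊢
  linarith

/-- For nonzero `ẑ ∈ ℤ₈` and `d̂ ∈ {0,1}ⁿ` of Hamming weight at least `n/8`,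
the Fourier coefficient `|E_s[e^{−2πi ẑ (d̂·s)/8}]|` over uniform `s ∈ {0,1}ⁿ`
is bounded by `cos(π/8)^{n/8} ≤ 2^{−n/80}`. -/
theorem stmt4 (n : ℕ) (z : ZMod 8) (hz : z ≠ 0) (d : Fin n → Fin 2)
    (hd : (n : ℝ) / 8 ≤ (Finset.univ.filter fun i => d i = 1).card) :
    ‖(((2 : ℂ) ^ n)⁻¹ * ∑ s : Fin n → Fin 2,
        Complex.exp ((-2 * Real.pi * Complex.I * (z.val : ℂ) *
          ((∑ i, (d i : ℕ) * (s i : ℕ) : ℕ) : ℂ)) / 8))‖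
      ≤ Real.cos (Real.pi / 8) ^ ((n : ℝ) / 8) ∧
    Real.cos (Real.pi / 8) ^ ((n : ℝ) / 8) ≤ (2 : ℝ) ^ (-(n : ℝ) / 80) := by
  have hc0 := cos8_pos
  have hc1 : Real.cos (Real.pi / 8) ≤ 1 := Real.cos_le_one _
  have hm1 : 1 ≤ z.val := by
    rcases Nat.eq_zero_or_pos z.val with h | h
    · exact absurd ((ZMod.val_eq_zero z).mp h) hz
    · exact h
  have hm7 : z.val ≤ 7 := by have := ZMod.val_lt z; omega
  constructor
  · -- first inequality
    have factored : ‖(((2 : ℂ) ^ n)⁻¹ * ∑ s : Fin n → Fin 2,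
        Complex.exp ((-2 * Real.pi * Complex.I * (z.val : ℂ) *
          ((∑ i, (d i : ℕ) * (s i : ℕ) : ℕ) : ℂ)) / 8))‖
      = ∏ i : Fin n, (‖∑ b : Fin 2,
          Complex.exp ((-2 * Real.pi * Complex.I * (z.val : ℂ) / 8) * (((d i : ℕ) * (b : ℕ) : ℕ) : ℂ))‖ / 2) := by
      have key : (∑ s : Fin n → Fin 2, Complex.exp ((-2 * Real.pi * Complex.I * (z.val : ℂ) *
              ((∑ i, (d i : ℕ) * (s i : ℕ) : ℕ) : ℂ)) / 8))
          = ∏ i : Fin n, ∑ b : Fin 2,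
              Complex.exp ((-2 * Real.pi * Complex.I * (z.val : ℂ) / 8) * (((d i : ℕ) * (b : ℕ) : ℕ) : ℂ)) := by
        rw [Finset.prod_univ_sum (fun _ => Finset.univ), Fintype.piFinset_univ]
        refine Finset.sum_congr rfl fun s _ => ?_
        rw [← Complex.exp_sum]
        congr 1
        push_cast
        rw [Finset.mul_sum, Finset.sum_div]
        exact Finset.sum_congr rfl fun i _ => by ring
      rw [key, norm_mul, norm_inv, norm_pow, Complex.norm_two, norm_prod,
        Finset.prod_div_distrib, Finset.prod_const, Finset.card_univ, Fintype.card_fin]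
      ring
    rw [factored]
    have pointwise : ∀ i : Fin n,
        ‖∑ b : Fin 2,
          Complex.exp ((-2 * Real.pi * Complex.I * (z.val : ℂ) / 8) * (((d i : ℕ) * (b : ℕ) : ℕ) : ℂ))‖ / 2
        ≤ (if d i = 1 then Real.cos (Real.pi / 8) else 1) := by
      intro i
      rw [Fin.sum_univ_two]
      by_cases hdi : d i = 1
      · simp only [hdi, if_pos]
        have h0 : ((1 : Fin 2) : ℕ) * ((0 : Fin 2) : ℕ) = 0 := by norm_num
        have h1 : ((1 : Fin 2) : ℕ) * ((1 : Fin 2) : ℕ) = 1 := by norm_num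
        rw [h0, h1]
        simp only [Nat.cast_zero, mul_zero, Complex.exp_zero, Nat.cast_one, mul_one]
        have := absB z.val hm1 hm7
        linarith
      · have hdi0 : d i = 0 := by omega
        simp only [hdi, if_neg, hdi0]
        norm_num
    calc ∏ i : Fin n, (‖∑ b : Fin 2,
          Complex.exp ((-2 * Real.pi * Complex.I * (z.val : ℂ) / 8) * (((d i : ℕ) * (b : ℕ) : ℕ) : ℂ))‖ / 2)
        ≤ ∏ i : Fin n, (if d i = 1 then Real.cos (Real.pi / 8) else 1) :=
          Finset.prod_le_prod (fun i _ => by positivity) (fun i _ => pointwise i)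
      _ = Real.cos (Real.pi / 8) ^ ((Finset.univ.filter fun i => d i = 1).card : ℕ) := by
          rw [Finset.prod_ite, Finset.prod_const, Finset.prod_const_one, mul_one]
      _ = Real.cos (Real.pi / 8) ^ (((Finset.univ.filter fun i => d i = 1).card : ℝ)) := by
          rw [Real.rpow_natCast]
      _ ≤ Real.cos (Real.pi / 8) ^ ((n : ℝ) / 8) :=
          Real.rpow_le_rpow_of_exponent_ge hc0 hc1 hd
  · -- second inequality
    have step : Real.cos (Real.pi / 8) ^ ((n : ℝ) / 8)
        ≤ ((2:ℝ) ^ (-(1:ℝ)/10)) ^ ((n : ℝ) / 8) :=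
      Real.rpow_le_rpow hc0.le cos8_le (by positivity)
    calc Real.cos (Real.pi / 8) ^ ((n : ℝ) / 8) ≤ ((2:ℝ) ^ (-(1:ℝ)/10)) ^ ((n : ℝ) / 8) := step
      _ = (2:ℝ) ^ ((-(1:ℝ)/10) * ((n:ℝ)/8)) := by
          rw [← Real.rpow_mul (by norm_num)]
      _ = (2:ℝ) ^ (-(n : ℝ) / 80) := by ring_nf
end

section
/- Let |ψ⟩ ∈ H_A ⊗ H_B and let Z, X be binary observables (Hermitian with Z² = X² = Id) on H_A satisfying ‖{Z,X} ⊗ Id_B |ψ⟩‖² ≤ δ. Then there exists an isometry V : H_A → ℂ² ⊗ H_{A'} such that ‖(Z − V†(σ_Z⊗Id)V) ⊗ Id_B |ψ⟩‖² = O(√δ) and ‖(X − V†(σ_X⊗Id)V) ⊗ Id_B |ψ⟩‖² = O(√δ). -/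
open Matrix
open scoped Kronecker

noncomputable def pauliZ : Matrix (Fin 2) (Fin 2) ℂ := !![1, 0; 0, -1]
noncomputable def pauliX : Matrix (Fin 2) (Fin 2) ℂ := !![0, 1; 1, 0]

/-- The squared ℓ² norm of a bipartite state vector. -/
noncomputable def vecNormSq {a b : ℕ} (v : Fin a × Fin b → ℂ) : ℝ :=
  ∑ p, ‖v p‖ ^ 2

section Aux

variable {a b n : ℕ}

lemma vecNormSq_eq_re (v : Fin a × Fin b → ℂ) :
    vecNormSq v = (star v ⬝ᵥ v).re := by
  simp only [vecNormSq, dotProduct, Pi.star_apply, Complex.re_sum]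
  refine Finset.sum_congr rfl fun p _ => ?_
  rw [Complex.sq_norm, ← Complex.ofReal_re (Complex.normSq (v p)),
    Complex.normSq_eq_conj_mul_self]
  rfl

lemma vecNormSq_mulVec_unitary (U : Matrix (Fin a × Fin b) (Fin a × Fin b) ℂ)
    (h : Uᴴ * U = 1) (v : Fin a × Fin b → ℂ) :
    vecNormSq (U.mulVec v) = vecNormSq v := by
  rw [vecNormSq_eq_re, vecNormSq_eq_re]
  congr 1
  rw [star_mulVec, dotProduct_mulVec, vecMul_vecMul, h, vecMul_one]

lemma vecNormSq_smul (c : ℂ) (v : Fin a × Fin b → ℂ) :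
    vecNormSq (c • v) = ‖c‖ ^ 2 * vecNormSq v := by
  simp only [vecNormSq, Pi.smul_apply, smul_eq_mul, norm_mul, mul_pow, Finset.mul_sum]

lemma vecNormSq_eq_norm_sq (v : Fin a × Fin b → ℂ) :
    vecNormSq v = ‖(WithLp.equiv 2 (Fin a × Fin b → ℂ)).symm v‖ ^ 2 := by
  rw [EuclideanSpace.norm_eq, Real.sq_sqrt (by positivity)]
  simp [vecNormSq]

lemma vecNormSq_nonneg (v : Fin a × Fin b → ℂ) : 0 ≤ vecNormSq v := by
  unfold vecNormSq; positivity

lemma vecNormSq_add_le (u v : Fin a × Fin b → ℂ) :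
    vecNormSq (u + v) ≤ (Real.sqrt (vecNormSq u) + Real.sqrt (vecNormSq v)) ^ 2 := by
  rw [vecNormSq_eq_norm_sq u, vecNormSq_eq_norm_sq v, vecNormSq_eq_norm_sq (u + v),
    Real.sqrt_sq (norm_nonneg _), Real.sqrt_sq (norm_nonneg _)]
  have : (WithLp.equiv 2 (Fin a × Fin b → ℂ)).symm (u + v)
      = (WithLp.equiv 2 (Fin a × Fin b → ℂ)).symm u
        + (WithLp.equiv 2 (Fin a × Fin b → ℂ)).symm v := rfl
  rw [this]
  have h := norm_add_le ((WithLp.equiv 2 (Fin a × Fin b → ℂ)).symm u)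
    ((WithLp.equiv 2 (Fin a × Fin b → ℂ)).symm v)
  nlinarith [norm_nonneg ((WithLp.equiv 2 (Fin a × Fin b → ℂ)).symm u),
    norm_nonneg ((WithLp.equiv 2 (Fin a × Fin b → ℂ)).symm v),
    norm_nonneg ((WithLp.equiv 2 (Fin a × Fin b → ℂ)).symm u
      + (WithLp.equiv 2 (Fin a × Fin b → ℂ)).symm v)]

/-- The swap isometry built from two blocks. -/
noncomputable def Vblk (P Q : Matrix (Fin n) (Fin n) ℂ) : Matrix (Fin 2 × Fin n) (Fin n) ℂ :=
  Matrix.of fun p k => if p.1 = 0 then P p.2 k else Q p.2 k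

lemma Vblk_conj_mul (M : Matrix (Fin 2) (Fin 2) ℂ) (P Q : Matrix (Fin n) (Fin n) ℂ) :
    (Vblk P Q)ᴴ * (M ⊗ₖ (1 : Matrix (Fin n) (Fin n) ℂ)) * Vblk P Q
      = M 0 0 • (Pᴴ * P) + M 0 1 • (Pᴴ * Q) + M 1 0 • (Qᴴ * P) + M 1 1 • (Qᴴ * Q) := by
  ext j k
  simp only [mul_apply, conjTranspose_apply, Vblk, of_apply, kroneckerMap_apply,
    Matrix.add_apply, Matrix.smul_apply, smul_eq_mul, one_apply,
    Fintype.sum_prod_type, Fin.sum_univ_two]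
  simp only [Fin.isValue, if_true, one_ne_zero, if_false, mul_ite, ite_mul, mul_zero, zero_mul,
    mul_one, Finset.sum_ite_eq, Finset.sum_ite_eq', Finset.mem_univ, if_true]
  have hc : ∀ (A B : Matrix (Fin n) (Fin n) ℂ) (c : ℂ),
      ∑ x, star (A x j) * c * B x k = c * ∑ x, star (A x j) * B x k := by
    intro A B c
    rw [Finset.mul_sum]
    exact Finset.sum_congr rfl fun x _ => by ring
  simp only [add_mul, Finset.sum_add_distrib, hc]
  ring

lemma Vblk_isometry (P Q : Matrix (Fin n) (Fin n) ℂ)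
    (h : Pᴴ * P + Qᴴ * Q = 1) : (Vblk P Q)ᴴ * Vblk P Q = 1 := by
  have h2 : (Vblk P Q)ᴴ * ((1 : Matrix (Fin 2) (Fin 2) ℂ) ⊗ₖ (1 : Matrix (Fin n) (Fin n) ℂ))
      * Vblk P Q = 1 := by
    rw [Vblk_conj_mul]
    simp only [Matrix.one_apply_eq, Matrix.one_apply_ne (by decide : (0 : Fin 2) ≠ 1),
      Matrix.one_apply_ne (by decide : (1 : Fin 2) ≠ 0), one_smul, zero_smul]
    simpa using h
  rwa [Matrix.one_kronecker_one, Matrix.mul_one] at h2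

end Aux

section Aux2

variable {a b : ℕ}

lemma kron_one_conjTranspose (A : Matrix (Fin a) (Fin a) ℂ) :
    (A ⊗ₖ (1 : Matrix (Fin b) (Fin b) ℂ))ᴴ = Aᴴ ⊗ₖ 1 := by
  ext ⟨i, j⟩ ⟨k, l⟩
  simp [conjTranspose_apply, kroneckerMap_apply, one_apply, apply_ite, eq_comm]
  split_ifs <;> simp_all

lemma kron_one_mul (A B : Matrix (Fin a) (Fin a) ℂ) :
    (A * B) ⊗ₖ (1 : Matrix (Fin b) (Fin b) ℂ) = (A ⊗ₖ 1) * (B ⊗ₖ 1) := by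
  rw [← Matrix.mul_one (1 : Matrix (Fin b) (Fin b) ℂ), Matrix.mul_kronecker_mul]
  simp

lemma kron_one_unitary (A : Matrix (Fin a) (Fin a) ℂ) (hA : Aᴴ * A = 1) :
    (A ⊗ₖ (1 : Matrix (Fin b) (Fin b) ℂ))ᴴ * (A ⊗ₖ 1) = 1 := by
  rw [kron_one_conjTranspose, ← kron_one_mul, hA, Matrix.one_kronecker_one]

lemma vecNormSq_kron_unitary (A : Matrix (Fin a) (Fin a) ℂ) (hA : Aᴴ * A = 1)
    (v : Fin a × Fin b → ℂ) :
    vecNormSq ((A ⊗ₖ (1 : Matrix (Fin b) (Fin b) ℂ)).mulVec v) = vecNormSq v :=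
  vecNormSq_mulVec_unitary _ (kron_one_unitary A hA) v

end Aux2

/-- If binary observables `Z, X` on `H_A` approximately anticommute on a bipartite
state `|ψ⟩` (i.e. `‖{Z,X} ⊗ Id |ψ⟩‖² ≤ δ`), then there is an isometry
`V : H_A → ℂ² ⊗ H_{A'}` under which `Z ≈ σ_Z ⊗ Id` and `X ≈ σ_X ⊗ Id` up to
state-dependent error `O(√δ)`. -/
theorem stmt13 : ∃ Cu : ℝ, 0 < Cu ∧
    ∀ (a b : ℕ) (Z X : Matrix (Fin a) (Fin a) ℂ) (ψ : Fin a × Fin b → ℂ) (δ : ℝ),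
      0 ≤ δ → Z.IsHermitian → X.IsHermitian →
      Z * Z = 1 → X * X = 1 → vecNormSq ψ = 1 →
      vecNormSq (((Z * X + X * Z) ⊗ₖ (1 : Matrix (Fin b) (Fin b) ℂ)).mulVec ψ) ≤ δ →
      ∃ (a' : ℕ) (V : Matrix (Fin 2 × Fin a') (Fin a) ℂ),
        Vᴴ * V = 1 ∧
        vecNormSq (((Z - Vᴴ * (pauliZ ⊗ₖ (1 : Matrix (Fin a') (Fin a') ℂ)) * V) ⊗ₖ
            (1 : Matrix (Fin b) (Fin b) ℂ)).mulVec ψ) ≤ Cu * Real.sqrt δ ∧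
        vecNormSq (((X - Vᴴ * (pauliX ⊗ₖ (1 : Matrix (Fin a') (Fin a') ℂ)) * V) ⊗ₖ
            (1 : Matrix (Fin b) (Fin b) ℂ)).mulVec ψ) ≤ Cu * Real.sqrt δ := by
  refine ⟨1, one_pos, ?_⟩
  intro a b Z X ψ δ hδ hZ hX hZ2 hX2 hψ hanti
  set P : Matrix (Fin a) (Fin a) ℂ := (1/2 : ℂ) • (1 + Z) with hP
  set Q : Matrix (Fin a) (Fin a) ℂ := X * ((1/2 : ℂ) • (1 - Z)) with hQ
  have hPH : Pᴴ = P := by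
    rw [hP, conjTranspose_smul, conjTranspose_add, conjTranspose_one, hZ.eq]
    norm_num
  have hQH : Qᴴ = ((1/2 : ℂ) • (1 - Z)) * X := by
    rw [hQ, conjTranspose_mul, conjTranspose_smul, conjTranspose_sub, conjTranspose_one,
      hZ.eq, hX.eq]
    norm_num
  have sq1 : (1 + Z) * (1 + Z) = (2 : ℂ) • (1 + Z) := by
    simp only [mul_add, add_mul, mul_one, one_mul]
    rw [hZ2]
    module
  have sq2 : (1 - Z) * (1 - Z) = (2 : ℂ) • (1 - Z) := by
    simp only [mul_sub, sub_mul, mul_one, one_mul]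
    rw [hZ2]
    module
  have e1 : Pᴴ * P = (1/2 : ℂ) • (1 + Z) := by
    rw [hPH, hP, smul_mul_assoc, mul_smul_comm, sq1]
    module
  have e2 : Qᴴ * Q = (1/2 : ℂ) • (1 - Z) := by
    rw [hQH, hQ, mul_assoc ((1/2 : ℂ) • (1 - Z)) X (X * ((1/2 : ℂ) • (1 - Z))), ← mul_assoc X X,
      hX2, one_mul, smul_mul_assoc, mul_smul_comm, sq2]
    module
  have e3 : Pᴴ * Q + Qᴴ * P = (1/2 : ℂ) • (X - Z * X * Z) := by
    rw [hPH, hQH, hP, hQ]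
    have hh : (1 + Z) * (X * (1 - Z)) + (1 - Z) * X * (1 + Z)
        = (2 : ℂ) • (X - Z * X * Z) := by
      simp only [mul_add, add_mul, mul_sub, sub_mul, mul_one, one_mul, ← mul_assoc]
      module
    simp only [smul_mul_assoc, mul_smul_comm, smul_smul]
    rw [← smul_add, hh]
    module
  have hiso : (Vblk P Q)ᴴ * Vblk P Q = 1 := by
    refine Vblk_isometry P Q ?_
    rw [e1, e2]
    module
  have p00 : pauliZ 0 0 = 1 := by norm_num [pauliZ]
  have p01 : pauliZ 0 1 = 0 := by norm_num [pauliZ]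
  have p10 : pauliZ 1 0 = 0 := by norm_num [pauliZ]
  have p11 : pauliZ 1 1 = -1 := by norm_num [pauliZ]
  have q00 : pauliX 0 0 = 0 := by norm_num [pauliX]
  have q01 : pauliX 0 1 = 1 := by norm_num [pauliX]
  have q10 : pauliX 1 0 = 1 := by norm_num [pauliX]
  have q11 : pauliX 1 1 = 0 := by norm_num [pauliX]
  have hVZ : (Vblk P Q)ᴴ * (pauliZ ⊗ₖ (1 : Matrix (Fin a) (Fin a) ℂ)) * Vblk P Q = Z := by
    rw [Vblk_conj_mul, p00, p01, p10, p11, e1, e2]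
    module
  have hVX : (Vblk P Q)ᴴ * (pauliX ⊗ₖ (1 : Matrix (Fin a) (Fin a) ℂ)) * Vblk P Q
      = (1/2 : ℂ) • (X - Z * X * Z) := by
    rw [Vblk_conj_mul, q00, q01, q10, q11, e1, e2, ← e3]
    module
  have hXerr : X - (Vblk P Q)ᴴ * (pauliX ⊗ₖ (1 : Matrix (Fin a) (Fin a) ℂ)) * Vblk P Q
      = ((1/2 : ℂ) • Z) * (Z * X + X * Z) := by
    rw [hVX, smul_mul_assoc, mul_add, ← mul_assoc, hZ2, one_mul, ← mul_assoc]
    module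
  have hu1 : (Z * X)ᴴ * (Z * X) = 1 := by
    rw [conjTranspose_mul, hZ.eq, hX.eq, mul_assoc, ← mul_assoc Z Z X, hZ2, one_mul, hX2]
  have hu2 : (X * Z)ᴴ * (X * Z) = 1 := by
    rw [conjTranspose_mul, hZ.eq, hX.eq, mul_assoc, ← mul_assoc X X Z, hX2, one_mul, hZ2]
  have hN4 : vecNormSq (((Z * X + X * Z) ⊗ₖ (1 : Matrix (Fin b) (Fin b) ℂ)).mulVec ψ) ≤ 4 := by
    have hsplit : (((Z * X + X * Z) ⊗ₖ (1 : Matrix (Fin b) (Fin b) ℂ)).mulVec ψ)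
        = ((Z * X) ⊗ₖ (1 : Matrix (Fin b) (Fin b) ℂ)).mulVec ψ
          + ((X * Z) ⊗ₖ (1 : Matrix (Fin b) (Fin b) ℂ)).mulVec ψ := by
      rw [Matrix.add_kronecker, Matrix.add_mulVec]
    have n1 : vecNormSq (((Z * X) ⊗ₖ (1 : Matrix (Fin b) (Fin b) ℂ)).mulVec ψ) = 1 := by
      rw [vecNormSq_kron_unitary _ hu1, hψ]
    have n2 : vecNormSq (((X * Z) ⊗ₖ (1 : Matrix (Fin b) (Fin b) ℂ)).mulVec ψ) = 1 := by
      rw [vecNormSq_kron_unitary _ hu2, hψ]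
    calc vecNormSq (((Z * X + X * Z) ⊗ₖ (1 : Matrix (Fin b) (Fin b) ℂ)).mulVec ψ)
        ≤ (Real.sqrt (vecNormSq (((Z * X) ⊗ₖ (1 : Matrix (Fin b) (Fin b) ℂ)).mulVec ψ))
          + Real.sqrt (vecNormSq (((X * Z) ⊗ₖ (1 : Matrix (Fin b) (Fin b) ℂ)).mulVec ψ))) ^ 2 := by
          rw [hsplit]; exact vecNormSq_add_le _ _
      _ = 4 := by rw [n1, n2, Real.sqrt_one]; norm_num
  have hE : vecNormSq (((((1/2 : ℂ) • Z) * (Z * X + X * Z)) ⊗ₖ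
        (1 : Matrix (Fin b) (Fin b) ℂ)).mulVec ψ)
      = (1/4) * vecNormSq (((Z * X + X * Z) ⊗ₖ (1 : Matrix (Fin b) (Fin b) ℂ)).mulVec ψ) := by
    rw [kron_one_mul, ← Matrix.mulVec_mulVec, Matrix.smul_kronecker, Matrix.smul_mulVec,
      vecNormSq_smul, vecNormSq_kron_unitary Z (by rw [hZ.eq, hZ2])]
    norm_num
  have hs0 : 0 ≤ Real.sqrt δ := Real.sqrt_nonneg δ
  have hss : Real.sqrt δ ^ 2 = δ := Real.sq_sqrt hδ
  refine ⟨a, Vblk P Q, hiso, ?_, ?_⟩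
  · rw [show Z - (Vblk P Q)ᴴ * (pauliZ ⊗ₖ (1 : Matrix (Fin a) (Fin a) ℂ)) * Vblk P Q = 0 by
      rw [hVZ, sub_self]]
    rw [Matrix.zero_kronecker, Matrix.zero_mulVec]
    have : vecNormSq (0 : Fin a × Fin b → ℂ) = 0 := by simp [vecNormSq]
    rw [this, one_mul]
    exact hs0
  · rw [hXerr, hE]
    rcases le_or_gt δ 4 with h4 | h4
    · have hle2 : Real.sqrt δ ≤ 2 := by nlinarith [sq_nonneg (Real.sqrt δ - 2)]
      have : δ ≤ 2 * Real.sqrt δ := by nlinarith [mul_nonneg hs0 (by linarith : (0:ℝ) ≤ 2 - Real.sqrt δ)]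
      nlinarith [hanti]
    · have h1 : (1:ℝ) ≤ Real.sqrt δ := by
        rw [show (1:ℝ) = Real.sqrt 1 by simp]
        exact Real.sqrt_le_sqrt (by linarith)
      nlinarith [hN4]
end

section
/- Let Z, X, X' be binary observables on H_A and |ψ⟩ ∈ H_A ⊗ H_B such that ‖{Z,X}⊗Id|ψ⟩‖² ≤ δ and ‖{Z,X'}⊗Id|ψ⟩‖² ≤ δ. Then there exist δ' = O(√δ), an isometry V: H_A → ℂ²⊗H_{A'}, and commuting Hermitian operators A_X, A_Y on H_{A'} with A_X² + A_Y² = Id, such that under V (i.e. up to error δ' in the state-dependent norm on |ψ⟩): Z ≃ σ_Z⊗Id, X ≃ σ_X⊗Id, and X' ≃ σ_X⊗A_X + σ_Y⊗A_Y. -/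
open Matrix
open scoped Kronecker

noncomputable def pauliY : Matrix (Fin 2) (Fin 2) ℂ := !![0, -Complex.I; Complex.I, 0]

/-! ### Auxiliary lemmas about `vecNormSq` -/

lemma st14_vecNormSq_eq_re {a b : ℕ} (v : Fin a × Fin b → ℂ) :
    vecNormSq v = (star v ⬝ᵥ v).re := by
  simp only [vecNormSq, dotProduct, Pi.star_apply, Complex.star_def, Complex.conj_mul',
    Complex.re_sum]
  refine Finset.sum_congr rfl fun p _ => ?_
  norm_cast

lemma st14_vecNormSq_nonneg {a b : ℕ} (v : Fin a × Fin b → ℂ) : 0 ≤ vecNormSq v :=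
  Finset.sum_nonneg fun _ _ => sq_nonneg _

lemma st14_vecNormSq_smul {a b : ℕ} (c : ℂ) (v : Fin a × Fin b → ℂ) :
    vecNormSq (c • v) = ‖c‖ ^ 2 * vecNormSq v := by
  simp [vecNormSq, Finset.mul_sum, mul_pow]

lemma st14_vecNormSq_add_le {a b : ℕ} (u v : Fin a × Fin b → ℂ) :
    vecNormSq (u + v) ≤ 2 * (vecNormSq u + vecNormSq v) := by
  have h1 : vecNormSq (u + v) ≤ ∑ p, (2 * ‖u p‖ ^ 2 + 2 * ‖v p‖ ^ 2) := by
    refine Finset.sum_le_sum fun p _ => ?_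
    have := norm_add_le (u p) (v p)
    have h0 := norm_nonneg (u p + v p)
    simp only [Pi.add_apply]
    nlinarith [norm_nonneg (u p), norm_nonneg (v p),
      sq_nonneg (‖u p‖ - ‖v p‖),
      sq_nonneg (‖u p‖ + ‖v p‖)]
  calc vecNormSq (u + v) ≤ _ := h1
    _ = 2 * (vecNormSq u + vecNormSq v) := by
        rw [Finset.sum_add_distrib, ← Finset.mul_sum, ← Finset.mul_sum, vecNormSq, vecNormSq]
        ring

lemma st14_vecNormSq_isometry {a b : ℕ} (U : Matrix (Fin a × Fin b) (Fin a × Fin b) ℂ)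
    (h : Uᴴ * U = 1) (v : Fin a × Fin b → ℂ) :
    vecNormSq (U.mulVec v) = vecNormSq v := by
  rw [st14_vecNormSq_eq_re, st14_vecNormSq_eq_re]
  congr 1
  rw [star_mulVec, dotProduct_mulVec, vecMul_vecMul, h, vecMul_one]

lemma st14_kron_conjT {m n p q : Type*} [Fintype m] [Fintype n] [Fintype p] [Fintype q]
    (A : Matrix m n ℂ) (B : Matrix p q ℂ) : (A ⊗ₖ B)ᴴ = Aᴴ ⊗ₖ Bᴴ := by
  ext ⟨i, j⟩ ⟨k, l⟩
  simp [conjTranspose_apply, kroneckerMap_apply, mul_comm]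

lemma st14_isomKron {a b : ℕ} (U : Matrix (Fin a) (Fin a) ℂ) (hU : Uᴴ * U = 1) :
    (U ⊗ₖ (1 : Matrix (Fin b) (Fin b) ℂ))ᴴ * (U ⊗ₖ (1 : Matrix (Fin b) (Fin b) ℂ)) = 1 := by
  rw [st14_kron_conjT, conjTranspose_one, ← mul_kronecker_mul, hU, Matrix.one_mul,
    one_kronecker_one]

/-- The key analytic bound: the state-dependent norm of
`(1/2) Z {Z,Y} ⊗ 1` applied to `ψ` is at most `√δ`. -/
lemma st14_normBound {a b : ℕ} (Z Y : Matrix (Fin a) (Fin a) ℂ) (ψ : Fin a × Fin b → ℂ) (δ : ℝ)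
    (hδ : 0 ≤ δ) (hZH : Zᴴ = Z) (hYH : Yᴴ = Y) (hZ2 : Z * Z = 1) (hY2 : Y * Y = 1)
    (hψ : vecNormSq ψ = 1)
    (hD : vecNormSq (((Z * Y + Y * Z) ⊗ₖ (1 : Matrix (Fin b) (Fin b) ℂ)).mulVec ψ) ≤ δ) :
    vecNormSq ((((1/2:ℂ) • (Z * (Z * Y + Y * Z))) ⊗ₖ (1 : Matrix (Fin b) (Fin b) ℂ)).mulVec ψ)
      ≤ Real.sqrt δ := by
  set D : Matrix (Fin a) (Fin a) ℂ := Z * Y + Y * Z with hDdef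
  have hZU : (Z ⊗ₖ (1 : Matrix (Fin b) (Fin b) ℂ))ᴴ * (Z ⊗ₖ 1) = 1 :=
    st14_isomKron Z (by rw [hZH, hZ2])
  have e1 : ((1/2:ℂ) • (Z * D)) ⊗ₖ (1 : Matrix (Fin b) (Fin b) ℂ) =
      (1/2:ℂ) • ((Z ⊗ₖ (1 : Matrix (Fin b) (Fin b) ℂ)) * (D ⊗ₖ 1)) := by
    rw [smul_kronecker, ← mul_kronecker_mul, Matrix.mul_one]
  have habs : ‖((1:ℂ)/2)‖ ^ 2 = 1/4 := by
    rw [norm_div]; norm_num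
  have hval : vecNormSq ((((1/2:ℂ) • (Z * D)) ⊗ₖ (1 : Matrix (Fin b) (Fin b) ℂ)).mulVec ψ) =
      (1/4) * vecNormSq ((D ⊗ₖ (1 : Matrix (Fin b) (Fin b) ℂ)).mulVec ψ) := by
    rw [e1, smul_mulVec, st14_vecNormSq_smul, habs, ← mulVec_mulVec,
      st14_vecNormSq_isometry _ hZU]
  have hZY : vecNormSq (((Z * Y) ⊗ₖ (1 : Matrix (Fin b) (Fin b) ℂ)).mulVec ψ) = 1 := by
    rw [st14_vecNormSq_isometry _ (st14_isomKron (Z * Y) ?_), hψ]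
    rw [conjTranspose_mul, hZH, hYH, Matrix.mul_assoc, ← Matrix.mul_assoc Z Z Y, hZ2,
      Matrix.one_mul, hY2]
  have hYZ : vecNormSq (((Y * Z) ⊗ₖ (1 : Matrix (Fin b) (Fin b) ℂ)).mulVec ψ) = 1 := by
    rw [st14_vecNormSq_isometry _ (st14_isomKron (Y * Z) ?_), hψ]
    rw [conjTranspose_mul, hZH, hYH, Matrix.mul_assoc, ← Matrix.mul_assoc Y Y Z, hY2,
      Matrix.one_mul, hZ2]
  have hq4 : vecNormSq ((D ⊗ₖ (1 : Matrix (Fin b) (Fin b) ℂ)).mulVec ψ) ≤ 4 := by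
    have hsplit : (D ⊗ₖ (1 : Matrix (Fin b) (Fin b) ℂ)).mulVec ψ =
        ((Z * Y) ⊗ₖ (1 : Matrix (Fin b) (Fin b) ℂ)).mulVec ψ +
        ((Y * Z) ⊗ₖ (1 : Matrix (Fin b) (Fin b) ℂ)).mulVec ψ := by
      rw [hDdef, add_kronecker, add_mulVec]
    rw [hsplit]
    calc vecNormSq _ ≤ 2 * (vecNormSq (((Z * Y) ⊗ₖ (1 : Matrix (Fin b) (Fin b) ℂ)).mulVec ψ) +
          vecNormSq (((Y * Z) ⊗ₖ (1 : Matrix (Fin b) (Fin b) ℂ)).mulVec ψ)) :=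
        st14_vecNormSq_add_le _ _
      _ = 4 := by rw [hZY, hYZ]; norm_num
  have hq0 := st14_vecNormSq_nonneg ((D ⊗ₖ (1 : Matrix (Fin b) (Fin b) ℂ)).mulVec ψ)
  rw [hval]
  set q := vecNormSq ((D ⊗ₖ (1 : Matrix (Fin b) (Fin b) ℂ)).mulVec ψ)
  have hs0 := Real.sqrt_nonneg δ
  have hssq := Real.sq_sqrt hδ
  rcases le_total δ 1 with h1 | h1
  · have hsle : Real.sqrt δ ≤ 1 := by
      rw [show (1:ℝ) = Real.sqrt 1 by simp]
      exact Real.sqrt_le_sqrt h1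
    nlinarith [mul_nonneg hs0 (sub_nonneg.2 hsle)]
  · have h2 : (1:ℝ) ≤ Real.sqrt δ := by
      rw [show (1:ℝ) = Real.sqrt 1 by simp]
      exact Real.sqrt_le_sqrt h1
    nlinarith

/-! ### The embedding `E_i : H_A → ℂ² ⊗ H_A` and block computations -/

noncomputable def st14Emb (a : ℕ) (i : Fin 2) : Matrix (Fin 2 × Fin a) (Fin a) ℂ :=
  Matrix.of fun p k => if p = (i, k) then 1 else 0

lemma st14_Emb_conjT_mul (a : ℕ) (i i' : Fin 2) :
    (st14Emb a i)ᴴ * st14Emb a i' = if i = i' then (1 : Matrix (Fin a) (Fin a) ℂ) else 0 := by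
  ext k l
  simp only [st14Emb, conjTranspose_apply, of_apply, mul_apply, apply_ite (star : ℂ → ℂ),
    star_one, star_zero, ite_mul, one_mul, zero_mul, Finset.sum_ite_eq', Finset.mem_univ,
    if_true]
  by_cases h : i = i' <;> by_cases h2 : k = l <;>
    simp [h, h2, Prod.ext_iff, Matrix.one_apply, eq_comm]

lemma st14_Emb_conjT_kron_mul (a : ℕ) (M : Matrix (Fin 2) (Fin 2) ℂ)
    (N : Matrix (Fin a) (Fin a) ℂ) (i i' : Fin 2) :
    (st14Emb a i)ᴴ * ((M ⊗ₖ N) * st14Emb a i') = M i i' • N := by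
  ext k l
  simp [st14Emb, conjTranspose_apply, mul_apply, kroneckerMap_apply, mul_ite, mul_one, mul_zero,
    ite_mul, one_mul, zero_mul, Finset.sum_ite_eq', apply_ite (star : ℂ → ℂ)]

lemma st14_Vblock (a : ℕ) (C₀ C₁ : Matrix (Fin a) (Fin a) ℂ) (M : Matrix (Fin 2) (Fin 2) ℂ)
    (N : Matrix (Fin a) (Fin a) ℂ) :
    (st14Emb a 0 * C₀ + st14Emb a 1 * C₁)ᴴ *
        ((M ⊗ₖ N) * (st14Emb a 0 * C₀ + st14Emb a 1 * C₁)) =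
      M 0 0 • (C₀ᴴ * (N * C₀)) + M 0 1 • (C₀ᴴ * (N * C₁)) +
      M 1 0 • (C₁ᴴ * (N * C₀)) + M 1 1 • (C₁ᴴ * (N * C₁)) := by
  have key : ∀ (i j : Fin 2) (D C : Matrix (Fin a) (Fin a) ℂ),
      (D * (st14Emb a i)ᴴ) * ((M ⊗ₖ N) * (st14Emb a j * C)) = M i j • (D * (N * C)) := by
    intro i j D C
    have h1 : (D * (st14Emb a i)ᴴ) * ((M ⊗ₖ N) * (st14Emb a j * C)) =
        D * (((st14Emb a i)ᴴ * ((M ⊗ₖ N) * st14Emb a j)) * C) := by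
      simp only [Matrix.mul_assoc]
    rw [h1, st14_Emb_conjT_kron_mul, smul_mul_assoc, mul_smul_comm]
  simp only [conjTranspose_add, conjTranspose_mul, Matrix.mul_add, Matrix.add_mul, key]
  abel

lemma st14_Visom (a : ℕ) (C₀ C₁ : Matrix (Fin a) (Fin a) ℂ) :
    (st14Emb a 0 * C₀ + st14Emb a 1 * C₁)ᴴ * (st14Emb a 0 * C₀ + st14Emb a 1 * C₁) =
      C₀ᴴ * C₀ + C₁ᴴ * C₁ := by
  have key : ∀ (i j : Fin 2) (D C : Matrix (Fin a) (Fin a) ℂ),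
      (D * (st14Emb a i)ᴴ) * (st14Emb a j * C) = if i = j then D * C else 0 := by
    intro i j D C
    have h1 : (D * (st14Emb a i)ᴴ) * (st14Emb a j * C) =
        D * (((st14Emb a i)ᴴ * st14Emb a j) * C) := by
      simp only [Matrix.mul_assoc]
    rw [h1, st14_Emb_conjT_mul]
    split_ifs <;> simp
  simp only [conjTranspose_add, conjTranspose_mul, Matrix.mul_add, Matrix.add_mul, key]
  norm_num

/-! ### Pure matrix algebra lemmas -/

section Alg

variable {a : ℕ}

lemma st14_resid (Z Y : Matrix (Fin a) (Fin a) ℂ) (hZ2 : Z * Z = 1) :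
    Y - (((1/2:ℂ) • (1 + Z)) * (Y * ((1/2:ℂ) • (1 - Z))) +
        ((1/2:ℂ) • (1 - Z)) * (Y * ((1/2:ℂ) • (1 + Z)))) =
      (1/2:ℂ) • (Z * (Z * Y + Y * Z)) := by
  have hZZM : ∀ M : Matrix (Fin a) (Fin a) ℂ, Z * (Z * M) = M := fun M => by
    rw [← Matrix.mul_assoc, hZ2, Matrix.one_mul]
  simp only [smul_mul_assoc, mul_smul_comm, smul_smul, smul_add, smul_sub,
    Matrix.add_mul, Matrix.mul_add, Matrix.sub_mul, Matrix.mul_sub, Matrix.one_mul,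
    Matrix.mul_one, Matrix.mul_assoc, hZZM, hZ2]
  module

lemma st14_PP (Z : Matrix (Fin a) (Fin a) ℂ) (hZ2 : Z * Z = 1) :
    ((1/2:ℂ) • (1 + Z)) * ((1/2:ℂ) • (1 + Z)) = (1/2:ℂ) • (1 + Z) := by
  simp only [smul_mul_assoc, mul_smul_comm, smul_smul, Matrix.add_mul, Matrix.mul_add,
    Matrix.one_mul, Matrix.mul_one, hZ2]
  module

lemma st14_QQ (Z : Matrix (Fin a) (Fin a) ℂ) (hZ2 : Z * Z = 1) :
    ((1/2:ℂ) • (1 - Z)) * ((1/2:ℂ) • (1 - Z)) = (1/2:ℂ) • (1 - Z) := by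
  simp only [smul_mul_assoc, mul_smul_comm, smul_smul, Matrix.sub_mul, Matrix.mul_sub,
    Matrix.one_mul, Matrix.mul_one, hZ2]
  module

lemma st14_PplusQ (Z : Matrix (Fin a) (Fin a) ℂ) :
    ((1/2:ℂ) • (1 + Z)) + ((1/2:ℂ) • (1 - Z)) = 1 := by module

lemma st14_hermP (Z : Matrix (Fin a) (Fin a) ℂ) (hZ : Zᴴ = Z) :
    ((1/2:ℂ) • (1 + Z))ᴴ = (1/2:ℂ) • (1 + Z) := by
  simp [conjTranspose_smul, conjTranspose_add, conjTranspose_one, hZ]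

lemma st14_hermQ (Z : Matrix (Fin a) (Fin a) ℂ) (hZ : Zᴴ = Z) :
    ((1/2:ℂ) • (1 - Z))ᴴ = (1/2:ℂ) • (1 - Z) := by
  simp [conjTranspose_smul, conjTranspose_sub, conjTranspose_one, hZ]

lemma st14_hII1 : (-Complex.I) * (Complex.I / 2) = (1/2 : ℂ) := by
  rw [neg_mul, mul_div_assoc', Complex.I_mul_I]; norm_num

lemma st14_hII2 : Complex.I * (Complex.I / 2) = -(1/2 : ℂ) := by
  rw [mul_div_assoc', Complex.I_mul_I]; norm_num

lemma st14_AXherm (X X' : Matrix (Fin a) (Fin a) ℂ) (hX : Xᴴ = X) (hX' : X'ᴴ = X') :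
    ((1/2:ℂ) • (X' * X + X * X')).IsHermitian := by
  unfold Matrix.IsHermitian
  simp only [conjTranspose_smul, conjTranspose_add, conjTranspose_mul, hX, hX']
  rw [show star (1/2:ℂ) = (1/2:ℂ) by simp]
  module

lemma st14_AYherm (X X' : Matrix (Fin a) (Fin a) ℂ) (hX : Xᴴ = X) (hX' : X'ᴴ = X') :
    ((Complex.I/2) • (X' * X - X * X')).IsHermitian := by
  unfold Matrix.IsHermitian
  simp only [conjTranspose_smul, conjTranspose_sub, conjTranspose_mul, hX, hX']
  rw [show star (Complex.I/2 : ℂ) = -(Complex.I/2) by simp [Complex.ext_iff]; norm_num]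
  module

lemma st14_AXAYcomm (X X' : Matrix (Fin a) (Fin a) ℂ) (hX2 : X * X = 1) (hX'2 : X' * X' = 1) :
    ((1/2:ℂ) • (X' * X + X * X')) * ((Complex.I/2) • (X' * X - X * X')) =
    ((Complex.I/2) • (X' * X - X * X')) * ((1/2:ℂ) • (X' * X + X * X')) := by
  have h1 : (X' * X) * (X * X') = 1 := by
    rw [Matrix.mul_assoc, ← Matrix.mul_assoc X X X', hX2, Matrix.one_mul, hX'2]
  have h2 : (X * X') * (X' * X) = 1 := by
    rw [Matrix.mul_assoc, ← Matrix.mul_assoc X' X' X, hX'2, Matrix.one_mul, hX2]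
  simp only [smul_mul_assoc, mul_smul_comm, smul_smul, Matrix.add_mul, Matrix.mul_add,
    Matrix.sub_mul, Matrix.mul_sub, h1, h2]
  module

lemma st14_AXAYsq (X X' : Matrix (Fin a) (Fin a) ℂ) (hX2 : X * X = 1) (hX'2 : X' * X' = 1) :
    ((1/2:ℂ) • (X' * X + X * X')) * ((1/2:ℂ) • (X' * X + X * X')) +
    ((Complex.I/2) • (X' * X - X * X')) * ((Complex.I/2) • (X' * X - X * X')) = 1 := by
  have h1 : (X' * X) * (X * X') = 1 := by
    rw [Matrix.mul_assoc, ← Matrix.mul_assoc X X X', hX2, Matrix.one_mul, hX'2]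
  have h2 : (X * X') * (X' * X) = 1 := by
    rw [Matrix.mul_assoc, ← Matrix.mul_assoc X' X' X, hX'2, Matrix.one_mul, hX2]
  simp only [smul_mul_assoc, mul_smul_comm, smul_smul, Matrix.add_mul, Matrix.mul_add,
    Matrix.sub_mul, Matrix.mul_sub, h1, h2]
  rw [show Complex.I/2 * (Complex.I/2) = -(1/4 : ℂ) by
    rw [div_mul_div_comm, Complex.I_mul_I]; norm_num]
  module

lemma st14_I3alg (Z X X' : Matrix (Fin a) (Fin a) ℂ) (hZ2 : Z * Z = 1) (hX2 : X * X = 1) :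
    X' - (((1/2:ℂ) • (1 + Z)) * (((1/2:ℂ) • (X' * X + X * X')) * (X * ((1/2:ℂ) • (1 - Z)))) +
      (((1/2:ℂ) • (1 - Z)) * X) * (((1/2:ℂ) • (X' * X + X * X')) * ((1/2:ℂ) • (1 + Z))) +
      ((-Complex.I) • (((1/2:ℂ) • (1 + Z)) *
          (((Complex.I/2) • (X' * X - X * X')) * (X * ((1/2:ℂ) • (1 - Z))))) +
       Complex.I • ((((1/2:ℂ) • (1 - Z)) * X) *
          (((Complex.I/2) • (X' * X - X * X')) * ((1/2:ℂ) • (1 + Z)))))) =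
    (1/2:ℂ) • (Z * (Z * X' + X' * Z)) := by
  have hZZM : ∀ M : Matrix (Fin a) (Fin a) ℂ, Z * (Z * M) = M := fun M => by
    rw [← Matrix.mul_assoc, hZ2, Matrix.one_mul]
  have hXXM : ∀ M : Matrix (Fin a) (Fin a) ℂ, X * (X * M) = M := fun M => by
    rw [← Matrix.mul_assoc, hX2, Matrix.one_mul]
  simp only [smul_mul_assoc, mul_smul_comm, smul_smul, smul_add, smul_sub,
    Matrix.add_mul, Matrix.mul_add, Matrix.sub_mul, Matrix.mul_sub, Matrix.one_mul,
    Matrix.mul_one, Matrix.mul_assoc, hXXM, hZZM, hX2, hZ2]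
  match_scalars <;> (ring_nf; try simp [Complex.I_sq]) <;> try norm_num

end Alg

/-- If binary observables `Z, X, X'` on `H_A` satisfy `‖{Z,X}⊗Id|ψ⟩‖² ≤ δ` and
`‖{Z,X'}⊗Id|ψ⟩‖² ≤ δ`, then there are an isometry `V : H_A → ℂ²⊗H_{A'}` and
commuting Hermitian `A_X, A_Y` with `A_X² + A_Y² = Id` such that, up to
state-dependent error `O(√δ)`, `Z ≃ σ_Z⊗Id`, `X ≃ σ_X⊗Id`, and
`X' ≃ σ_X⊗A_X + σ_Y⊗A_Y`. -/
theorem stmt14 : ∃ Cu : ℝ, 0 < Cu ∧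
    ∀ (a b : ℕ) (Z X X' : Matrix (Fin a) (Fin a) ℂ) (ψ : Fin a × Fin b → ℂ) (δ : ℝ),
      0 ≤ δ → Z.IsHermitian → X.IsHermitian → X'.IsHermitian →
      Z * Z = 1 → X * X = 1 → X' * X' = 1 → vecNormSq ψ = 1 →
      vecNormSq (((Z * X + X * Z) ⊗ₖ (1 : Matrix (Fin b) (Fin b) ℂ)).mulVec ψ) ≤ δ →
      vecNormSq (((Z * X' + X' * Z) ⊗ₖ (1 : Matrix (Fin b) (Fin b) ℂ)).mulVec ψ) ≤ δ →
      ∃ (a' : ℕ) (V : Matrix (Fin 2 × Fin a') (Fin a) ℂ)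
        (AX AY : Matrix (Fin a') (Fin a') ℂ),
        Vᴴ * V = 1 ∧
        AX.IsHermitian ∧ AY.IsHermitian ∧ AX * AY = AY * AX ∧
        AX * AX + AY * AY = 1 ∧
        vecNormSq (((Z - Vᴴ * (pauliZ ⊗ₖ (1 : Matrix (Fin a') (Fin a') ℂ)) * V) ⊗ₖ
            (1 : Matrix (Fin b) (Fin b) ℂ)).mulVec ψ) ≤ Cu * Real.sqrt δ ∧
        vecNormSq (((X - Vᴴ * (pauliX ⊗ₖ (1 : Matrix (Fin a') (Fin a') ℂ)) * V) ⊗ₖ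
            (1 : Matrix (Fin b) (Fin b) ℂ)).mulVec ψ) ≤ Cu * Real.sqrt δ ∧
        vecNormSq (((X' - Vᴴ * (pauliX ⊗ₖ AX + pauliY ⊗ₖ AY) * V) ⊗ₖ
            (1 : Matrix (Fin b) (Fin b) ℂ)).mulVec ψ) ≤ Cu * Real.sqrt δ := by
  refine ⟨1, one_pos, ?_⟩
  intro a b Z X X' ψ δ hδ hZH hXH hX'H hZ2 hX2 hX'2 hψ hDX hDX'
  have hZHe : Zᴴ = Z := hZH
  have hXHe : Xᴴ = X := hXH
  have hX'He : X'ᴴ = X' := hX'H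
  -- pauli matrix entries
  have pZ00 : pauliZ 0 0 = 1 := rfl
  have pZ01 : pauliZ 0 1 = 0 := rfl
  have pZ10 : pauliZ 1 0 = 0 := rfl
  have pZ11 : pauliZ 1 1 = -1 := rfl
  have pX00 : pauliX 0 0 = 0 := rfl
  have pX01 : pauliX 0 1 = 1 := rfl
  have pX10 : pauliX 1 0 = 1 := rfl
  have pX11 : pauliX 1 1 = 0 := rfl
  have pY00 : pauliY 0 0 = 0 := rfl
  have pY01 : pauliY 0 1 = -Complex.I := rfl
  have pY10 : pauliY 1 0 = Complex.I := rfl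
  have pY11 : pauliY 1 1 = 0 := rfl
  set P : Matrix (Fin a) (Fin a) ℂ := (1/2:ℂ) • (1 + Z) with hPdef
  set Q : Matrix (Fin a) (Fin a) ℂ := (1/2:ℂ) • (1 - Z) with hQdef
  set V : Matrix (Fin 2 × Fin a) (Fin a) ℂ := st14Emb a 0 * P + st14Emb a 1 * (X * Q)
    with hVdef
  set AX : Matrix (Fin a) (Fin a) ℂ := (1/2:ℂ) • (X' * X + X * X') with hAXdef
  set AY : Matrix (Fin a) (Fin a) ℂ := (Complex.I/2) • (X' * X - X * X') with hAYdef
  have hQXXQ : (((1/2:ℂ) • (1 - Z)) * X) * (X * ((1/2:ℂ) • (1 - Z))) =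
      (1/2:ℂ) • (1 - Z) := by
    rw [Matrix.mul_assoc, ← Matrix.mul_assoc X X _, hX2, Matrix.one_mul, st14_QQ Z hZ2]
  refine ⟨a, V, AX, AY, ?_, ?_, ?_, ?_, ?_, ?_, ?_, ?_⟩
  · -- isometry
    rw [hVdef, hPdef, hQdef, st14_Visom, st14_hermP Z hZHe, conjTranspose_mul,
      st14_hermQ Z hZHe, hXHe, st14_PP Z hZ2, hQXXQ, st14_PplusQ]
  · rw [hAXdef]; exact st14_AXherm X X' hXHe hX'He
  · rw [hAYdef]; exact st14_AYherm X X' hXHe hX'He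
  · rw [hAXdef, hAYdef]; exact st14_AXAYcomm X X' hX2 hX'2
  · rw [hAXdef, hAYdef]; exact st14_AXAYsq X X' hX2 hX'2
  · -- Z residual is exactly 0
    have hZid : Z - Vᴴ * (pauliZ ⊗ₖ (1 : Matrix (Fin a) (Fin a) ℂ)) * V = 0 := by
      rw [hVdef, hPdef, hQdef, Matrix.mul_assoc, st14_Vblock, pZ00, pZ01, pZ10, pZ11]
      simp only [one_smul, zero_smul, neg_smul, add_zero, zero_add, Matrix.one_mul,
        conjTranspose_mul, st14_hermP Z hZHe, st14_hermQ Z hZHe, hXHe]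
      rw [st14_PP Z hZ2, hQXXQ]
      module
    rw [hZid]
    simp only [zero_kronecker, zero_mulVec]
    have : vecNormSq (0 : Fin a × Fin b → ℂ) = 0 := by simp [vecNormSq]
    rw [this, one_mul]
    positivity
  · -- X residual
    have hXid : X - Vᴴ * (pauliX ⊗ₖ (1 : Matrix (Fin a) (Fin a) ℂ)) * V =
        (1/2:ℂ) • (Z * (Z * X + X * Z)) := by
      rw [hVdef, hPdef, hQdef, Matrix.mul_assoc, st14_Vblock, pX00, pX01, pX10, pX11]
      simp only [one_smul, zero_smul, add_zero, zero_add, Matrix.one_mul,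
        conjTranspose_mul, st14_hermP Z hZHe, st14_hermQ Z hZHe, hXHe]
      simp only [Matrix.mul_assoc]
      exact st14_resid Z X hZ2
    rw [hXid, one_mul]
    exact st14_normBound Z X ψ δ hδ hZHe hXHe hZ2 hX2 hψ hDX
  · -- X' residual
    have hX'id : X' - Vᴴ * (pauliX ⊗ₖ AX + pauliY ⊗ₖ AY) * V =
        (1/2:ℂ) • (Z * (Z * X' + X' * Z)) := by
      rw [hVdef, hPdef, hQdef, hAXdef, hAYdef, Matrix.mul_assoc, Matrix.add_mul,
        Matrix.mul_add, st14_Vblock, st14_Vblock, pX00, pX01, pX10, pX11, pY00, pY01,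
        pY10, pY11]
      simp only [one_smul, zero_smul, add_zero, zero_add, Matrix.one_mul,
        conjTranspose_mul, st14_hermP Z hZHe, st14_hermQ Z hZHe, hXHe]
      exact st14_I3alg Z X X' hZ2 hX2
    rw [hX'id, one_mul]
    exact st14_normBound Z X' ψ δ hδ hZHe hX'He hZ2 hX'2 hψ hDX'
end
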